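/- Suppose SCC holds and M is a countable elementary substructure of (H_θ, ∈, Δ) such that M has no pair of countable elementary ⊑-extensions whose intersections with ω₂ are ⊆-incomparable. Then any two Chang elementary ⊑-extensions X, Y of M (elementary in (H_θ, ∈, Δ)) satisfy X ∩ ω₂ = Y ∩ ω₂. -/
import Mathlib


open FirstOrder Set

noncomputable def ω1 : Ordinal := (Cardinal.aleph 1).ord
noncomputable def ω2 : Ordinal := (Cardinal.aleph 2).ord

/-- The trace of `M ⊆ H` on the ordinals below `γ`, where `oe : Ordinal → H` is the
identification of (set-theoretic) ordinals with elements of `H = H_θ`. -/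
def otr {H : Type*} (oe : Ordinal → H) (γ : Ordinal) (M : Set H) : Set Ordinal :=
  {α | α < γ ∧ oe α ∈ M}

/-- `M` is (the underlying set of) an elementary substructure, w.r.t. the structure `st`. -/
def IsElemSetOf (L : FirstOrder.Language) {H : Type*} (st : L.Structure H) (M : Set H) : Prop :=
  letI := st
  ∃ S : L.ElementarySubstructure H, (S : Set H) = M

/-- The language with two binary relation symbols (for `∈` and a wellorder `Δ`). -/
def setLang : FirstOrder.Language where
  Functions := fun _ => Empty
  Relations := fun n => match n with | 2 => Bool | _ => Empty

/-- The structure `(H, ∈, Δ)` for `setLang`. -/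
def setStruct {H : Type*} (mem Δ : H → H → Prop) : setLang.Structure H where
  funMap := fun f _ => f.elim
  RelMap := fun {n} =>
    match n with
    | 0 => fun r _ => r.elim
    | 1 => fun r _ => r.elim
    | 2 => fun b x => cond (show Bool from b) (mem (x 0) (x 1)) (Δ (x 0) (x 1))
    | _ + 3 => fun r _ => r.elim

/-- The language with one binary relation symbol (for `∈`). -/
def memLang : FirstOrder.Language where
  Functions := fun _ => Empty
  Relations := fun n => match n with | 2 => Unit | _ => Empty

/-- The structure `(H, ∈)` for `memLang`. -/
def memStruct {H : Type*} (mem : H → H → Prop) : memLang.Structure H where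
  funMap := fun f _ => f.elim
  RelMap := fun {n} =>
    match n with
    | 0 => fun r _ => r.elim
    | 1 => fun r _ => r.elim
    | 2 => fun _ x => mem (x 0) (x 1)
    | _ + 3 => fun r _ => r.elim

/-- `M ⊑ N` : `M ⊆ N` and `M ∩ ω₁ = N ∩ ω₁`. -/
def sqle {H : Type*} (oe : Ordinal → H) (M N : Set H) : Prop :=
  M ⊆ N ∧ otr oe ω1 M = otr oe ω1 N

/-- `A` is an initial segment of `B` (as sets of ordinals). -/
def InitialSegOf (A B : Set Ordinal) : Prop :=
  A ⊆ B ∧ ∀ b ∈ B, ∀ a ∈ A, b < a → b ∈ A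

/-- `X` is a Chang set: `|X ∩ ω₂| = ω₁` and `X ∩ ω₁` is a countable ordinal. -/
def Chang {H : Type*} (oe : Ordinal → H) (X : Set H) : Prop :=
  Cardinal.mk ↥(otr oe ω2 X) = Cardinal.aleph 1 ∧ ∃ δ, δ < ω1 ∧ otr oe ω1 X = Set.Iio δ


open FirstOrder.Language

/-- The range of an elementary embedding is an elementary substructure. -/
theorem range_elem {L : FirstOrder.Language} {M N : Type*} [L.Structure M] [L.Structure N]
    (f : M ↪ₑ[L] N) : ∃ U : L.ElementarySubstructure N, (U : Set N) = Set.range f := by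
  refine ⟨f.toHom.range.toElementarySubstructure ?_, ?_⟩
  · intro n φ x a ha
    choose y hy using fun i => (Language.Hom.mem_range.1 (x i).2)
    have hxy : ((↑) : _ → N) ∘ x = f ∘ y := by
      funext i; simp [← hy i, Language.ElementaryEmbedding.coe_toHom]
    have h1 : φ.ex.Realize (default : Empty → N) (f ∘ y) := by
      rw [← hxy, BoundedFormula.realize_ex]; exact ⟨a, ha⟩
    have hdef : (default : Empty → N) = f ∘ (default : Empty → M) := by
      funext i; exact i.elim
    rw [hdef, f.map_boundedFormula] at h1
    obtain ⟨b, hb⟩ := BoundedFormula.realize_ex.1 h1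
    refine ⟨⟨f b, Language.Hom.mem_range.2 ⟨b, by simp [Language.ElementaryEmbedding.coe_toHom]⟩⟩, ?_⟩
    have := (f.map_boundedFormula φ (v := default) (xs := Fin.snoc y b)).2 hb
    rw [← hdef, Fin.comp_snoc, ← hxy] at this
    exact this
  · exact rfl

instance : Countable setLang.Symbols := by
  haveI : ∀ l, Countable (setLang.Functions l) := fun _ => inferInstanceAs (Countable Empty)
  haveI : ∀ n, Countable (setLang.Relations n) := fun n =>
    match n with
    | 2 => inferInstanceAs (Countable Bool)
    | 0 => inferInstanceAs (Countable Empty)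
    | 1 => inferInstanceAs (Countable Empty)
    | (k+3) => inferInstanceAs (Countable Empty)
  exact inferInstanceAs (Countable ((Σ l, setLang.Functions l) ⊕ (Σ n, setLang.Relations n)))

theorem setLang_card_le : setLang.card ≤ Cardinal.aleph0 :=
  Cardinal.mk_le_aleph0

/-- Skolem hull: countable elementary subset of an infinite elementary set containing a
given countable subset. -/
theorem hull {H : Type*} (st : setLang.Structure H) (X : Set H)
    (hX : IsElemSetOf setLang st X) (hXinf : X.Infinite) (S : Set H) (hS : S.Countable)
    (hSX : S ⊆ X) : ∃ N : Set H, N.Countable ∧ IsElemSetOf setLang st N ∧ S ⊆ N ∧ N ⊆ X := by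
  letI := st
  obtain ⟨E, hE⟩ := hX
  haveI hEinf : Infinite ↥E := by
    have : Infinite ↥(E : Set H) := by rw [hE]; exact hXinf.to_subtype
    exact this
  have hs : ((Subtype.val : ↥E → H) ⁻¹' S).Countable :=
    (hS.preimage Subtype.val_injective)
  obtain ⟨T, hTsub, hTcard⟩ := Language.exists_elementarySubstructure_card_eq setLang
    ((Subtype.val : ↥E → H) ⁻¹' S) Cardinal.aleph0 le_rfl
    (by simpa using hs.le_aleph0) (by simpa using setLang_card_le)
    (by simpa using Cardinal.aleph0_le_mk ↥E)
  have hTc : Countable ↥T := by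
    rw [Cardinal.lift_inj] at hTcard
    exact Cardinal.mk_le_aleph0_iff.1 hTcard.le
  set f : ↥T ↪ₑ[setLang] H := E.subtype.comp T.subtype with hf
  obtain ⟨U, hU⟩ := range_elem f
  refine ⟨(U : Set H), ?_, ⟨U, rfl⟩, ?_, ?_⟩
  · rw [hU]; exact Set.countable_range _
  · intro x hx
    have hxE : x ∈ E := by rw [← SetLike.mem_coe, hE]; exact hSX hx
    have hmem : (⟨x, hxE⟩ : ↥E) ∈ T := hTsub hx
    rw [hU]
    exact ⟨⟨⟨x, hxE⟩, hmem⟩, rfl⟩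
  · rw [hU, ← hE]
    rintro _ ⟨y, rfl⟩
    exact ((y : ↥E)).2


theorem infinite_of_chang {H : Type*} (oe : Ordinal → H) (hoe : Function.Injective oe)
    (X : Set H) (hX : Chang oe X) : X.Infinite := by
  intro hfin
  have h1 : (otr oe ω2 X).Finite :=
    (hfin.preimage hoe.injOn).subset (fun α hα => hα.2)
  have h2 := h1.lt_aleph0
  rw [hX.1] at h2
  exact absurd h2 (not_lt.2 (Cardinal.aleph0_le_aleph 1))

theorem uncountable_of_chang {H : Type*} (oe : Ordinal → H)
    (X : Set H) (hX : Chang oe X) : ¬ (otr oe ω2 X).Countable := by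
  intro h
  have := h.le_aleph0
  rw [hX.1] at this
  exact absurd this (not_le.2 Cardinal.aleph0_lt_aleph_one)

theorem sqle_of_between {H : Type*} (oe : Ordinal → H) (M N X : Set H) (hMN : M ⊆ N)
    (hNX : N ⊆ X) (hMX : sqle oe M X) : sqle oe M N := by
  refine ⟨hMN, ?_⟩
  ext α
  constructor
  · rintro ⟨h1, h2⟩; exact ⟨h1, hMN h2⟩
  · rintro ⟨h1, h2⟩
    have hx : α ∈ otr oe ω1 X := ⟨h1, hNX h2⟩
    rw [← hMX.2] at hx; exact hx

theorem asym {H : Type*} (mem Δ : H → H → Prop) (oe : Ordinal → H)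
    (hoe : Function.Injective oe) (M : Set H) (hMc : M.Countable)
    (hno : ¬ ∃ M₀ M₁ : Set H, M₀.Countable ∧ M₁.Countable ∧
        IsElemSetOf setLang (setStruct mem Δ) M₀ ∧ IsElemSetOf setLang (setStruct mem Δ) M₁ ∧
        sqle oe M M₀ ∧ sqle oe M M₁ ∧
        ¬ otr oe ω2 M₀ ⊆ otr oe ω2 M₁ ∧ ¬ otr oe ω2 M₁ ⊆ otr oe ω2 M₀)
    (X Y : Set H)
    (hXe : IsElemSetOf setLang (setStruct mem Δ) X) (hXsq : sqle oe M X) (hXch : Chang oe X)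
    (hYe : IsElemSetOf setLang (setStruct mem Δ) Y) (hYsq : sqle oe M Y) (hYch : Chang oe Y)
    (β : Ordinal) (hβX : β ∈ otr oe ω2 X) (hβY : β ∉ otr oe ω2 Y) : False := by
  obtain ⟨N, hNc, hNe, hSN, hNX⟩ := hull (setStruct mem Δ) X hXe
    (infinite_of_chang oe hoe X hXch) (insert (oe β) M) (hMc.insert _)
    (Set.insert_subset hβX.2 hXsq.1)
  have hNctbl : (otr oe ω2 N).Countable := (hNc.preimage hoe).mono (fun α hα => hα.2)
  have hns : ¬ (otr oe ω2 Y ⊆ otr oe ω2 N) :=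
    fun h => uncountable_of_chang oe Y hYch (hNctbl.mono h)
  obtain ⟨η, hηY, hηN⟩ := Set.not_subset.1 hns
  obtain ⟨N', hN'c, hN'e, hSN', hN'Y⟩ := hull (setStruct mem Δ) Y hYe
    (infinite_of_chang oe hoe Y hYch) (insert (oe η) M) (hMc.insert _)
    (Set.insert_subset hηY.2 hYsq.1)
  apply hno
  refine ⟨N, N', hNc, hN'c, hNe, hN'e,
    sqle_of_between oe M N X ((Set.subset_insert _ _).trans hSN) hNX hXsq,
    sqle_of_between oe M N' Y ((Set.subset_insert _ _).trans hSN') hN'Y hYsq, ?_, ?_⟩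
  · intro h
    have hβN : β ∈ otr oe ω2 N := ⟨hβX.1, hSN (Set.mem_insert _ _)⟩
    exact hβY ⟨hβX.1, hN'Y (h hβN).2⟩
  · intro h
    exact hηN (h ⟨hηY.1, hSN' (Set.mem_insert _ _)⟩)


/-- if SCC holds and the countable elementary `M` has no pair of countable
elementary `⊑`-extensions with `⊆`-incomparable intersections with `ω₂`, then any two Chang
elementary `⊑`-extensions `X, Y` of `M` satisfy `X ∩ ω₂ = Y ∩ ω₂`. -/
theorem stmt_8 {H : Type*} (mem Δ : H → H → Prop) (hΔ : IsWellOrder H Δ)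
    (oe : Ordinal → H) (hoe : Function.Injective oe)
    (hSCC : ∀ M₀ : Set H, M₀.Countable → IsElemSetOf setLang (setStruct mem Δ) M₀ →
      ∃ M' : Set H, M'.Countable ∧ IsElemSetOf setLang (setStruct mem Δ) M' ∧
        sqle oe M₀ M' ∧ otr oe ω2 M₀ ⊂ otr oe ω2 M')
    (M : Set H) (hMc : M.Countable) (hMe : IsElemSetOf setLang (setStruct mem Δ) M)
    (hno : ¬ ∃ M₀ M₁ : Set H, M₀.Countable ∧ M₁.Countable ∧
        IsElemSetOf setLang (setStruct mem Δ) M₀ ∧ IsElemSetOf setLang (setStruct mem Δ) M₁ ∧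
        sqle oe M M₀ ∧ sqle oe M M₁ ∧
        ¬ otr oe ω2 M₀ ⊆ otr oe ω2 M₁ ∧ ¬ otr oe ω2 M₁ ⊆ otr oe ω2 M₀)
    (X Y : Set H)
    (hXe : IsElemSetOf setLang (setStruct mem Δ) X) (hXsq : sqle oe M X) (hXch : Chang oe X)
    (hYe : IsElemSetOf setLang (setStruct mem Δ) Y) (hYsq : sqle oe M Y) (hYch : Chang oe Y) :
    otr oe ω2 X = otr oe ω2 Y := by
  apply Set.Subset.antisymm
  · intro β hβ
    by_contra hβY
    exact asym mem Δ oe hoe M hMc hno X Y hXe hXsq hXch hYe hYsq hYch β hβ hβY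
  · intro β hβ
    by_contra hβX
    exact asym mem Δ oe hoe M hMc hno Y X hYe hYsq hYch hXe hXsq hXch β hβ hβX
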